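/- Let B1 := B^{(1)}[(4,5)→(2,3)], B2 := B^{(2)}[(1,5)→(4,3)], B3 := B^{(3)}[(1,2)→(4,5)], B4 := B^{(4)}[(1,5)→(2,3)], B5 := B^{(5)}[(1,2)→(4,3)]. For a 2×2 matrix M and distinct positions r<s in {1,2,3}, let M_{rs} denote the 3×3 matrix over F that acts as M on coordinates (r,s) (in that order) and as the identity on the remaining coordinate. Then the pentagon relation holds: (B1)_{12} · (B2)_{13} · (B3)_{23} = (B5)_{23} · (B4)_{12} as 3×3 matrices over F. -/

import Mathlib

/-- The determinant `d_{ijk}` built from the columns `(α_i,β_i,γ_i)`, `(α_j,β_j,γ_j)`,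
`(α_k,β_k,γ_k)`, for indices in `{1,…,5}`. -/
noncomputable def dd5 {F : Type*} [Field F] (al be ga : Fin 5 → F) (i j k : Fin 5) : F :=
  Matrix.det !![al i, al j, al k; be i, be j, be k; ga i, ga j, ga k]

/-- The pentagon ansatz matrix `B^{(p)}[(i₁,i₂)→(o₁,o₂)]`: its `(a,b)` entry is
`d_{j,o_b,p}/d_{i_a,j,p}` where `j` is the input other than `i_a`. -/
noncomputable def ansatzP {F : Type*} [Field F] (al be ga : Fin 5 → F) (p : Fin 5)
    (inp out : Fin 2 → Fin 5) : Matrix (Fin 2) (Fin 2) F := fun a b =>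
  dd5 al be ga (inp (a + 1)) (out b) p / dd5 al be ga (inp a) (inp (a + 1)) p

/-- `embed2 p0 p1 M` is the 3×3 matrix acting as the 2×2 matrix `M` on the (distinct)
coordinates `(p0,p1)` (in that order) and as the identity on the remaining coordinate. -/
noncomputable def embed2 {F : Type*} [Field F] (p0 p1 : Fin 3)
    (M : Matrix (Fin 2) (Fin 2) F) : Matrix (Fin 3) (Fin 3) F := fun r c =>
  if r = p0 then (if c = p0 then M 0 0 else if c = p1 then M 0 1 else 0)
  else if r = p1 then (if c = p0 then M 1 0 else if c = p1 then M 1 1 else 0)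
  else if r = c then 1 else 0

lemma dd5_eq {F : Type*} [Field F] (al be ga : Fin 5 → F) (i j k : Fin 5) :
    dd5 al be ga i j k = al i * be j * ga k - al i * be k * ga j - al j * be i * ga k
      + al j * be k * ga i + al k * be i * ga j - al k * be j * ga i := by
  simp [dd5, Matrix.det_fin_three]

lemma ds_021 {F : Type*} [Field F] (al be ga : Fin 5 → F) : dd5 al be ga 0 2 1 = -dd5 al be ga 0 1 2 := by simp only [dd5_eq]; ring
lemma ds_031 {F : Type*} [Field F] (al be ga : Fin 5 → F) : dd5 al be ga 0 3 1 = -dd5 al be ga 0 1 3 := by simp only [dd5_eq]; ring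
lemma ds_032 {F : Type*} [Field F] (al be ga : Fin 5 → F) : dd5 al be ga 0 3 2 = -dd5 al be ga 0 2 3 := by simp only [dd5_eq]; ring
lemma ds_041 {F : Type*} [Field F] (al be ga : Fin 5 → F) : dd5 al be ga 0 4 1 = -dd5 al be ga 0 1 4 := by simp only [dd5_eq]; ring
lemma ds_042 {F : Type*} [Field F] (al be ga : Fin 5 → F) : dd5 al be ga 0 4 2 = -dd5 al be ga 0 2 4 := by simp only [dd5_eq]; ring
lemma ds_043 {F : Type*} [Field F] (al be ga : Fin 5 → F) : dd5 al be ga 0 4 3 = -dd5 al be ga 0 3 4 := by simp only [dd5_eq]; ring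
lemma ds_102 {F : Type*} [Field F] (al be ga : Fin 5 → F) : dd5 al be ga 1 0 2 = -dd5 al be ga 0 1 2 := by simp only [dd5_eq]; ring
lemma ds_104 {F : Type*} [Field F] (al be ga : Fin 5 → F) : dd5 al be ga 1 0 4 = -dd5 al be ga 0 1 4 := by simp only [dd5_eq]; ring
lemma ds_132 {F : Type*} [Field F] (al be ga : Fin 5 → F) : dd5 al be ga 1 3 2 = -dd5 al be ga 1 2 3 := by simp only [dd5_eq]; ring
lemma ds_142 {F : Type*} [Field F] (al be ga : Fin 5 → F) : dd5 al be ga 1 4 2 = -dd5 al be ga 1 2 4 := by simp only [dd5_eq]; ring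
lemma ds_310 {F : Type*} [Field F] (al be ga : Fin 5 → F) : dd5 al be ga 3 1 0 = -dd5 al be ga 0 1 3 := by simp only [dd5_eq]; ring
lemma ds_320 {F : Type*} [Field F] (al be ga : Fin 5 → F) : dd5 al be ga 3 2 0 = -dd5 al be ga 0 2 3 := by simp only [dd5_eq]; ring
lemma ds_340 {F : Type*} [Field F] (al be ga : Fin 5 → F) : dd5 al be ga 3 4 0 = dd5 al be ga 0 3 4 := by simp only [dd5_eq]; ring
lemma ds_401 {F : Type*} [Field F] (al be ga : Fin 5 → F) : dd5 al be ga 4 0 1 = dd5 al be ga 0 1 4 := by simp only [dd5_eq]; ring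
lemma ds_403 {F : Type*} [Field F] (al be ga : Fin 5 → F) : dd5 al be ga 4 0 3 = dd5 al be ga 0 3 4 := by simp only [dd5_eq]; ring
lemma ds_410 {F : Type*} [Field F] (al be ga : Fin 5 → F) : dd5 al be ga 4 1 0 = -dd5 al be ga 0 1 4 := by simp only [dd5_eq]; ring
lemma ds_413 {F : Type*} [Field F] (al be ga : Fin 5 → F) : dd5 al be ga 4 1 3 = dd5 al be ga 1 3 4 := by simp only [dd5_eq]; ring
lemma ds_420 {F : Type*} [Field F] (al be ga : Fin 5 → F) : dd5 al be ga 4 2 0 = -dd5 al be ga 0 2 4 := by simp only [dd5_eq]; ring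
lemma ds_421 {F : Type*} [Field F] (al be ga : Fin 5 → F) : dd5 al be ga 4 2 1 = -dd5 al be ga 1 2 4 := by simp only [dd5_eq]; ring
lemma ds_423 {F : Type*} [Field F] (al be ga : Fin 5 → F) : dd5 al be ga 4 2 3 = dd5 al be ga 2 3 4 := by simp only [dd5_eq]; ring
lemma ds_430 {F : Type*} [Field F] (al be ga : Fin 5 → F) : dd5 al be ga 4 3 0 = -dd5 al be ga 0 3 4 := by simp only [dd5_eq]; ring
lemma ds_431 {F : Type*} [Field F] (al be ga : Fin 5 → F) : dd5 al be ga 4 3 1 = -dd5 al be ga 1 3 4 := by simp only [dd5_eq]; ring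

lemma plk0 {F : Type*} [Field F] (al be ga : Fin 5 → F) :
    dd5 al be ga 0 1 2 * dd5 al be ga 0 3 4 - dd5 al be ga 0 1 3 * dd5 al be ga 0 2 4
      + dd5 al be ga 0 1 4 * dd5 al be ga 0 2 3 = 0 := by simp only [dd5_eq]; ring
lemma plk1 {F : Type*} [Field F] (al be ga : Fin 5 → F) :
    dd5 al be ga 0 1 2 * dd5 al be ga 1 3 4 - dd5 al be ga 0 1 3 * dd5 al be ga 1 2 4
      + dd5 al be ga 0 1 4 * dd5 al be ga 1 2 3 = 0 := by simp only [dd5_eq]; ring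
lemma plk2 {F : Type*} [Field F] (al be ga : Fin 5 → F) :
    dd5 al be ga 0 1 2 * dd5 al be ga 2 3 4 - dd5 al be ga 0 2 3 * dd5 al be ga 1 2 4
      + dd5 al be ga 0 2 4 * dd5 al be ga 1 2 3 = 0 := by simp only [dd5_eq]; ring

lemma fmk2 (h : 2 < 3) : (⟨2, h⟩ : Fin 3) = 2 := rfl

set_option maxHeartbeats 1000000 in
/-- The pentagon relation `(B1)_{12} (B2)_{13} (B3)_{23} = (B5)_{23} (B4)_{12}`.
Vertices `1,…,5` are encoded as `0,…,4 : Fin 5`, positions `1,2,3` as `0,1,2 : Fin 3`. -/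
theorem pentagon_relation {F : Type*} [Field F] (al be ga : Fin 5 → F)
    (hgen : ∀ i j k : Fin 5, i ≠ j → i ≠ k → j ≠ k → dd5 al be ga i j k ≠ 0) :
    embed2 0 1 (ansatzP al be ga 0 ![3, 4] ![1, 2]) *
      embed2 0 2 (ansatzP al be ga 1 ![0, 4] ![3, 2]) *
      embed2 1 2 (ansatzP al be ga 2 ![0, 1] ![3, 4]) =
    embed2 1 2 (ansatzP al be ga 4 ![0, 1] ![3, 2]) *
      embed2 0 1 (ansatzP al be ga 3 ![0, 4] ![1, 2]) := by
  have h012 := hgen 0 1 2 (by decide) (by decide) (by decide)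
  have h013 := hgen 0 1 3 (by decide) (by decide) (by decide)
  have h014 := hgen 0 1 4 (by decide) (by decide) (by decide)
  have h034 := hgen 0 3 4 (by decide) (by decide) (by decide)
  have hA : embed2 0 1 (ansatzP al be ga 0 ![3, 4] ![1, 2]) =
      !![-(dd5 al be ga 0 1 4 / dd5 al be ga 0 3 4), -(dd5 al be ga 0 2 4 / dd5 al be ga 0 3 4), 0;
         dd5 al be ga 0 1 3 / dd5 al be ga 0 3 4, dd5 al be ga 0 2 3 / dd5 al be ga 0 3 4, 0;
         0, 0, 1] := by
    ext r c
    fin_cases r <;> fin_cases c <;>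
      simp [embed2, ansatzP, ds_410, ds_340, ds_420, ds_310, ds_430, ds_320, neg_div, div_neg]
  have hB : embed2 0 2 (ansatzP al be ga 1 ![0, 4] ![3, 2]) =
      !![dd5 al be ga 1 3 4 / dd5 al be ga 0 1 4, 0, dd5 al be ga 1 2 4 / dd5 al be ga 0 1 4;
         0, 1, 0;
         -(dd5 al be ga 0 1 3 / dd5 al be ga 0 1 4), 0, -(dd5 al be ga 0 1 2 / dd5 al be ga 0 1 4)] := by
    ext r c
    fin_cases r <;> fin_cases c <;>
      simp [embed2, ansatzP, ds_431, ds_041, ds_421, ds_031, ds_401, ds_021, neg_div, div_neg]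
  have hC : embed2 1 2 (ansatzP al be ga 2 ![0, 1] ![3, 4]) =
      !![1, 0, 0;
         0, -(dd5 al be ga 1 2 3 / dd5 al be ga 0 1 2), -(dd5 al be ga 1 2 4 / dd5 al be ga 0 1 2);
         0, dd5 al be ga 0 2 3 / dd5 al be ga 0 1 2, dd5 al be ga 0 2 4 / dd5 al be ga 0 1 2] := by
    ext r c
    fin_cases r <;> fin_cases c <;>
      simp [embed2, ansatzP, ds_132, ds_142, ds_032, ds_102, ds_042, neg_div, div_neg, Matrix.vecHead, Matrix.vecTail]
  have hE : embed2 1 2 (ansatzP al be ga 4 ![0, 1] ![3, 2]) =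
      !![1, 0, 0;
         0, dd5 al be ga 1 3 4 / dd5 al be ga 0 1 4, dd5 al be ga 1 2 4 / dd5 al be ga 0 1 4;
         0, -(dd5 al be ga 0 3 4 / dd5 al be ga 0 1 4), -(dd5 al be ga 0 2 4 / dd5 al be ga 0 1 4)] := by
    ext r c
    fin_cases r <;> fin_cases c <;>
      simp [embed2, ansatzP, ds_104, neg_div, div_neg, Matrix.vecHead, Matrix.vecTail]
  have hD : embed2 0 1 (ansatzP al be ga 3 ![0, 4] ![1, 2]) =
      !![-(dd5 al be ga 1 3 4 / dd5 al be ga 0 3 4), -(dd5 al be ga 2 3 4 / dd5 al be ga 0 3 4), 0;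
         dd5 al be ga 0 1 3 / dd5 al be ga 0 3 4, dd5 al be ga 0 2 3 / dd5 al be ga 0 3 4, 0;
         0, 0, 1] := by
    ext r c
    fin_cases r <;> fin_cases c <;>
      simp [embed2, ansatzP, ds_413, ds_043, ds_423, ds_403, neg_div, div_neg]
  rw [hA, hB, hC, hE, hD, Matrix.mul_fin_three, Matrix.mul_fin_three, Matrix.mul_fin_three]
  ext r c
  fin_cases r <;> fin_cases c <;>
    simp only [Matrix.cons_val', Matrix.cons_val_zero, Matrix.cons_val_one, Matrix.head_cons,
      Matrix.cons_val_two, Matrix.vecHead, Matrix.vecTail, Matrix.empty_val',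
      Matrix.cons_val_fin_one, Matrix.head_fin_const, Function.comp_apply, Fin.succ_zero_eq_one,
      Fin.succ_one_eq_two, Matrix.of_apply, Fin.isValue, Fin.zero_eta, Fin.mk_one, fmk2,
      mul_zero, zero_mul, add_zero, zero_add, mul_one, one_mul]
  · field_simp
  · field_simp
    linear_combination (1 : F) *
      plk2 al be ga
  · field_simp
    ring
  · field_simp
  · field_simp
    linear_combination (-(dd5 al be ga 0 2 3)) * plk1 al be ga
  · field_simp
    linear_combination (-(dd5 al be ga 1 2 4)) * plk0 al be ga
  · field_simp
  · field_simp
  · field_simp
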